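/- (Hindman's theorem, block sequence form) For every finite coloring of FIN (the set of nonempty finite subsets of ℕ) there exists an infinite block sequence (a_n)_{n∈ℕ} of finite sets (with max(a_n) < min(a_{n+1})) such that all finite unions a_{n_0} ∪ ⋯ ∪ a_{n_m}, n_0 < ⋯ < n_m, receive the same color. -/

import Mathlib

/-- The binary support of a natural number, as a `Finset`. -/
def hbsSupp (n : ℕ) : Finset ℕ := (Finset.range n).filter (fun i => n.testBit i)

lemma hbs_mem_supp {n i : ℕ} : i ∈ hbsSupp n ↔ n.testBit i = true := by
  simp only [hbsSupp, Finset.mem_filter, Finset.mem_range, and_iff_right_iff_imp]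
  intro h
  have h1 : 2 ^ i ≤ n := Nat.ge_two_pow_of_testBit h
  have h2 : i < 2 ^ i := Nat.lt_two_pow_self (n := i)
  omega

lemma hbs_supp_zero : hbsSupp 0 = ∅ := by
  ext i; simp [hbs_mem_supp]

/-- Adding a number below `2^K` to a multiple of `2^K` unions the binary supports. -/
lemma hbs_supp_add {A B K : ℕ} (hA : A < 2 ^ K) (hB : 2 ^ K ∣ B) :
    hbsSupp (A + B) = hbsSupp A ∪ hbsSupp B := by
  obtain ⟨B', rfl⟩ := hB
  ext i
  simp only [Finset.mem_union, hbs_mem_supp]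
  rw [add_comm, Nat.testBit_two_pow_mul_add _ hA, Nat.testBit_two_pow_mul]
  by_cases h : i < K
  · have : ¬ (i ≥ K) := by omega
    simp [h, this]
  · have hK : K ≤ i := by omega
    have : A < 2 ^ i := lt_of_lt_of_le hA (Nat.pow_le_pow_right (by norm_num) hK)
    simp [h, Nat.testBit_lt_two_pow this, hK]

lemma hbs_supp_bounds {y k K : ℕ} (h1 : 2 ^ k ∣ y) (h2 : y < 2 ^ K) :
    ∀ i ∈ hbsSupp y, k ≤ i ∧ i < K := by
  intro i hi
  rw [hbs_mem_supp] at hi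
  constructor
  · by_contra h
    push_neg at h
    obtain ⟨y', rfl⟩ := h1
    rw [Nat.testBit_two_pow_mul] at hi
    have : ¬ (i ≥ k) := by omega
    simp [this] at hi
  · have h3 : 2 ^ i ≤ y := Nat.ge_two_pow_of_testBit hi
    have := lt_of_le_of_lt h3 h2
    exact (Nat.pow_lt_pow_iff_right (by norm_num)).mp this

lemma hbs_supp_nonempty {y : ℕ} (hy : 0 < y) : (hbsSupp y).Nonempty := by
  obtain ⟨i, hi⟩ := Nat.exists_testBit_of_ne_zero (Nat.pos_iff_ne_zero.mp hy)
  exact ⟨i, hbs_mem_supp.mpr hi⟩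

/-- support of a sum of numbers with increasing separated supports is the union. -/
lemma hbs_supp_sum (y N : ℕ → ℕ) (hdvd : ∀ n, 2 ^ N n ∣ y n)
    (hlt : ∀ n, y n < 2 ^ N (n + 1)) (hmono : Monotone N) :
    ∀ s : Finset ℕ, hbsSupp (∑ n ∈ s, y n) = s.sup (fun n => hbsSupp (y n)) := by
  intro s
  induction s using Finset.strongInduction with
  | _ s ih =>
    rcases s.eq_empty_or_nonempty with rfl | hs
    · simp [hbs_supp_zero]
    · set m := s.min' hs with hm
      have hmmem : m ∈ s := s.min'_mem hs
      have hins : s = insert m (s.erase m) := (Finset.insert_erase hmmem).symm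
      have hmni : m ∉ s.erase m := Finset.notMem_erase _ _
      have hsum : ∑ n ∈ s, y n = y m + ∑ n ∈ s.erase m, y n :=
        (Finset.add_sum_erase s y hmmem).symm
      have hdvd' : 2 ^ N (m + 1) ∣ ∑ n ∈ s.erase m, y n := by
        apply Finset.dvd_sum
        intro n hn
        have hmn : m < n := Finset.min'_lt_of_mem_erase_min' _ hs hn
        exact dvd_trans (pow_dvd_pow 2 (hmono hmn)) (hdvd n)
      rw [hsum, hbs_supp_add (hlt m) hdvd', ih _ (Finset.erase_ssubset hmmem)]
      conv_rhs => rw [hins]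
      rw [Finset.sup_insert]
      rfl

/-- every finite sum over an interval can be made divisible by a given power of two. -/
lemma hbs_exists_interval (x : Stream' ℕ) (k N : ℕ) :
    ∃ pq : ℕ × ℕ, k ≤ pq.1 ∧ pq.1 < pq.2 ∧ 2 ^ N ∣ ∑ i ∈ Finset.Ico pq.1 pq.2, x.get i := by
  have hcard : (Finset.range (2 ^ N)).card < (Finset.range (2 ^ N + 1)).card := by
    simp
  have hmaps : ∀ j ∈ Finset.range (2 ^ N + 1),
      (∑ i ∈ Finset.Ico k (k + j), x.get i) % 2 ^ N ∈ Finset.range (2 ^ N) := by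
    intro j _
    exact Finset.mem_range.mpr (Nat.mod_lt _ (Nat.two_pow_pos N))
  obtain ⟨j1, -, j2, -, hne, heq⟩ :=
    Finset.exists_ne_map_eq_of_card_lt_of_maps_to hcard hmaps
  wlog hlt : j1 < j2 generalizing j1 j2
  · exact this j2 j1 hne.symm heq.symm (by omega)
  refine ⟨(k + j1, k + j2), by omega, by omega, ?_⟩
  have hsplit : ∑ i ∈ Finset.Ico k (k + j1), x.get i
      + ∑ i ∈ Finset.Ico (k + j1) (k + j2), x.get i
      = ∑ i ∈ Finset.Ico k (k + j2), x.get i :=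
    Finset.sum_Ico_consecutive _ (by omega) (by omega)
  have hle : ∑ i ∈ Finset.Ico k (k + j1), x.get i ≤ ∑ i ∈ Finset.Ico k (k + j2), x.get i := by
    omega
  have : (∑ i ∈ Finset.Ico k (k + j1), x.get i) ≡
      (∑ i ∈ Finset.Ico k (k + j2), x.get i) [MOD 2 ^ N] := heq
  have hdvd := (Nat.modEq_iff_dvd' hle).mp this
  have : ∑ i ∈ Finset.Ico k (k + j2), x.get i - ∑ i ∈ Finset.Ico k (k + j1), x.get i
      = ∑ i ∈ Finset.Ico (k + j1) (k + j2), x.get i := by omega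
  rwa [this] at hdvd

/-- Positivity of elements of `FS` of a positive sequence. -/
lemma hbs_FS_pos : ∀ (a : Stream' ℕ), (∀ i, 0 < a.get i) → ∀ m ∈ Hindman.FS a, 0 < m := by
  have h : ∀ (b : Stream' ℕ) (m : ℕ), m ∈ Hindman.FS b → (∀ i, 0 < b.get i) → 0 < m := by
    intro b m hm
    induction hm with
    | head' a => exact fun ha => ha 0
    | tail' a m h ih => exact fun ha => ih (fun i => by rw [Stream'.get_tail]; exact ha (i + 1))
    | cons' a m h ih => exact fun ha => Nat.add_pos_left (ha 0) m
  exact fun a ha m hm => h a m hm ha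

/-- Hindman, block sequence form: for every finite coloring
of the nonempty finite subsets of `ℕ` there is an infinite block sequence
`(a_n)` of finite sets (with `max (a n) < min (a m)` for `n < m`) all of
whose finite unions receive the same color. -/
theorem hindman_block_sequences (r : ℕ) (hr : 0 < r)
    (f : Finset ℕ → Fin r) :
    ∃ a : ℕ → Finset ℕ,
      (∀ n, (a n).Nonempty) ∧
      (∀ n m : ℕ, n < m → ∀ i ∈ a n, ∀ j ∈ a m, i < j) ∧
      ∃ c : Fin r, ∀ s : Finset ℕ, s.Nonempty → f (s.sup a) = c := by
  classical
  set g : ℕ → Fin r := fun n => f (hbsSupp n) with hg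
  -- the finite cover of positive naturals by color classes
  set S : Set (Set ℕ) := (fun i : Fin r => {n : ℕ | 0 < n ∧ g n = i}) '' Set.univ with hS
  have hSfin : S.Finite := (Set.finite_univ).image _
  set a0 : Stream' ℕ := fun _ => 1 with ha0
  have ha0pos : ∀ i, 0 < a0.get i := fun _ => Nat.one_pos
  have hcov : Hindman.FS a0 ⊆ ⋃₀ S := by
    intro m hm
    have hmpos : 0 < m := hbs_FS_pos a0 ha0pos m hm
    exact ⟨{n : ℕ | 0 < n ∧ g n = g m}, ⟨g m, Set.mem_univ _, rfl⟩, hmpos, rfl⟩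
  obtain ⟨C, hCS, x, hx⟩ := Hindman.FS_partition_regular a0 S hSfin hcov
  obtain ⟨cc, -, rfl⟩ := hCS
  -- hx : Hindman.FS x ⊆ {n | 0 < n ∧ g n = cc}
  -- build the block structure
  let pick : ℕ → ℕ → ℕ × ℕ := fun k N => (hbs_exists_interval x k N).choose
  have pick_spec : ∀ k N, k ≤ (pick k N).1 ∧ (pick k N).1 < (pick k N).2 ∧
      2 ^ N ∣ ∑ i ∈ Finset.Ico (pick k N).1 (pick k N).2, x.get i :=
    fun k N => (hbs_exists_interval x k N).choose_spec
  let Y : ℕ → ℕ → ℕ := fun k N => ∑ i ∈ Finset.Ico (pick k N).1 (pick k N).2, x.get i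
  let st : ℕ → ℕ × ℕ := fun n => Nat.rec (0, 0)
    (fun _ p => ((pick p.1 p.2).2, max (p.2 + 1) (Nat.size (Y p.1 p.2)))) n
  have hst : ∀ n, st (n + 1) =
      ((pick (st n).1 (st n).2).2, max ((st n).2 + 1) (Nat.size (Y (st n).1 (st n).2))) :=
    fun n => rfl
  let P : ℕ → ℕ := fun n => (pick (st n).1 (st n).2).1
  let Q : ℕ → ℕ := fun n => (pick (st n).1 (st n).2).2
  let y : ℕ → ℕ := fun n => Y (st n).1 (st n).2
  let N : ℕ → ℕ := fun n => (st n).2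
  have hyP : ∀ n, y n = ∑ i ∈ Finset.Ico (P n) (Q n), x.get i := fun n => rfl
  have hkP : ∀ n, (st n).1 ≤ P n := fun n => (pick_spec (st n).1 (st n).2).1
  have hPQ : ∀ n, P n < Q n := fun n => (pick_spec (st n).1 (st n).2).2.1
  have hdvd : ∀ n, 2 ^ N n ∣ y n := fun n => (pick_spec (st n).1 (st n).2).2.2
  have hk1 : ∀ n, (st (n + 1)).1 = Q n := fun n => by rw [hst n]
  have hN1 : ∀ n, N (n + 1) = max (N n + 1) (Nat.size (y n)) := fun n => by
    show (st (n+1)).2 = _; rw [hst n]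
  have hNmono : StrictMono N := strictMono_nat_of_lt_succ (fun n => by
    rw [hN1 n]; omega)
  have hylt : ∀ n, y n < 2 ^ N (n + 1) := fun n => by
    calc y n < 2 ^ Nat.size (y n) := Nat.lt_size_self _
    _ ≤ 2 ^ N (n + 1) := Nat.pow_le_pow_right (by norm_num) (by rw [hN1 n]; omega)
  -- intervals are increasing
  have hQP : ∀ n m, n < m → Q n ≤ P m := by
    have hkmono : ∀ n, (st n).1 ≤ (st (n + 1)).1 := fun n => by
      rw [hk1 n]; exact le_of_lt (lt_of_le_of_lt (hkP n) (hPQ n))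
    intro n m hnm
    calc Q n = (st (n + 1)).1 := (hk1 n).symm
    _ ≤ (st m).1 := by
        clear * - hkmono hnm
        induction m with
        | zero => exact absurd hnm (by omega)
        | succ m ih =>
          rcases Nat.lt_succ_iff_lt_or_eq.mp hnm with h | h
          · exact le_trans (ih h) (hkmono m)
          · subst h; exact le_rfl
    _ ≤ P m := hkP m
  -- sums of the `y`'s lie in `FS x`
  have hsum_mem : ∀ s : Finset ℕ, s.Nonempty → (∑ n ∈ s, y n) ∈ Hindman.FS x := by
    intro s hs
    have hdisj : (↑s : Set ℕ).PairwiseDisjoint (fun n => Finset.Ico (P n) (Q n)) := by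
      intro n _ m _ hnm
      rcases lt_or_gt_of_ne hnm with h | h
      · exact Finset.Ico_disjoint_Ico_consecutive _ _ _ |>.mono le_rfl
          (Finset.Ico_subset_Ico (hQP n m h) le_rfl)
      · exact (Finset.Ico_disjoint_Ico_consecutive _ _ _ |>.mono le_rfl
          (Finset.Ico_subset_Ico (hQP m n h) le_rfl)).symm
    have hsum : ∑ i ∈ s.biUnion (fun n => Finset.Ico (P n) (Q n)), x.get i = ∑ n ∈ s, y n := by
      rw [Finset.sum_biUnion hdisj]
    rw [← hsum]
    apply Hindman.FS.finset_sum
    obtain ⟨n, hn⟩ := hs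
    exact ⟨P n, Finset.mem_biUnion.mpr ⟨n, hn, Finset.mem_Ico.mpr ⟨le_rfl, hPQ n⟩⟩⟩
  have hypos : ∀ n, 0 < y n := by
    intro n
    have hmem : y n ∈ Hindman.FS x := by
      have := hsum_mem {n} ⟨n, Finset.mem_singleton_self n⟩
      simpa using this
    exact (hx hmem).1
  -- the block sequence
  refine ⟨fun n => hbsSupp (y n), fun n => hbs_supp_nonempty (hypos n), ?_, cc, ?_⟩
  · intro n m hnm i hi j hj
    have h1 : i < N (n + 1) := (hbs_supp_bounds (hdvd n) (hylt n) i hi).2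
    have h2 : N m ≤ j := (hbs_supp_bounds (hdvd m) (hylt m) j hj).1
    have h3 : N (n + 1) ≤ N m := hNmono.monotone hnm
    omega
  · intro s hs
    have hsupp : hbsSupp (∑ n ∈ s, y n) = s.sup (fun n => hbsSupp (y n)) :=
      hbs_supp_sum y N hdvd hylt hNmono.monotone s
    have hmem := hx (hsum_mem s hs)
    have := hmem.2
    rw [hg] at this
    rw [← hsupp]
    exact this
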